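/- Let P be a τ-periodic pattern and P' any nonempty pattern. Then lcp(P, P') ≥ 3τ - 1 holds if and only if P' is τ-periodic with root(P') = root(P) and head(P') = head(P). Moreover, if runend(P) ≤ |P| and lcp(P, P') ≥ runend(P), then runend(P') = runend(P), tail(P') = tail(P), runendfull(P') = runendfull(P), exp(P') = exp(P), and type(P') = type(P). -/

import Mathlib

namespace LZ

variable {α : Type*}

/-- `SubstrEq T i j ℓ`: the length-`ℓ` substrings of `T` (1-based positions)
starting at `i` and `j` are equal. -/
def SubstrEq (T : ℕ → α) (i j ℓ : ℕ) : Prop := ∀ t < ℓ, T (i + t) = T (j + t)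

/-- `perP P ℓ`: the shortest period of the prefix `P[1..ℓ]` of the (1-based) pattern `P`. -/
noncomputable def perP (P : ℕ → α) (ℓ : ℕ) : ℕ :=
  sInf {p | 0 < p ∧ ∀ t, t + p < ℓ → P (1 + t) = P (1 + t + p)}

/-- A pattern `P` of length `m` is `τ`-periodic if `m ≥ 3τ - 1` and
`per(P[1..3τ-1]) ≤ τ/3`. -/
noncomputable def IsPeriodicPat (τ : ℕ) (P : ℕ → α) (m : ℕ) : Prop :=
  3 * τ - 1 ≤ m ∧ 3 * perP P (3 * τ - 1) ≤ τ

/-- `runendP τ P m = 1 + p + lcp(P[1..m], P[1+p..m])` where `p = per(P[1..3τ-1])`. -/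
noncomputable def runendP (τ : ℕ) (P : ℕ → α) (m : ℕ) : ℕ :=
  1 + perP P (3 * τ - 1) +
    sSup {ℓ | perP P (3 * τ - 1) + ℓ ≤ m ∧
      ∀ t < ℓ, P (1 + t) = P (1 + perP P (3 * τ - 1) + t)}

/-- `rotP P p δ`: the length-`p` substring `P[1+δ..1+δ+p)` (a rotation of `P[1..p]`
when `P` has period `p`). -/
def rotP (P : ℕ → α) (p δ : ℕ) : List α := (List.range p).map fun t => P (1 + δ + t)

/-- The Lyndon root of a `τ`-periodic pattern `P`: the lexicographically smallest
rotation `P[1+δ..1+δ+p)`, `δ ∈ [0..p)`, where `p = per(P[1..3τ-1])`. -/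
noncomputable def rootP [LinearOrder α] (τ : ℕ) (P : ℕ → α) : List α :=
  ((List.range (perP P (3 * τ - 1))).map (rotP P (perP P (3 * τ - 1)))).foldr min
    (rotP P (perP P (3 * τ - 1)) 0)

/-- `headP τ P = |H'|` where `P[1..runend) = H' H^k H''` with `H = rootP τ P`:
the smallest offset `s` at which the Lyndon root occurs. -/
noncomputable def headP [LinearOrder α] (τ : ℕ) (P : ℕ → α) : ℕ :=
  sInf {s | rotP P (perP P (3 * τ - 1)) s = rootP τ P}

/-- `tailP τ P m = |H''|` in the factorization `P[1..runend) = H' H^k H''`. -/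
noncomputable def tailP [LinearOrder α] (τ : ℕ) (P : ℕ → α) (m : ℕ) : ℕ :=
  (runendP τ P m - 1 - headP τ P) % perP P (3 * τ - 1)

/-- `runendfullP τ P m = runendP τ P m - tailP τ P m`. -/
noncomputable def runendfullP [LinearOrder α] (τ : ℕ) (P : ℕ → α) (m : ℕ) : ℕ :=
  runendP τ P m - tailP τ P m

/-- `expP τ P m = k` in the factorization `P[1..runend) = H' H^k H''`. -/
noncomputable def expP [LinearOrder α] (τ : ℕ) (P : ℕ → α) (m : ℕ) : ℕ :=
  (runendP τ P m - 1 - headP τ P) / perP P (3 * τ - 1)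

/-- `typePosP τ P m`: the type of `P` is `+1`, i.e. `runend(P) ≤ |P|` and
`P[runend(P)] ≻ P[runend(P) - p]`. The type is `-1` iff this fails. -/
noncomputable def typePosP [LinearOrder α] (τ : ℕ) (P : ℕ → α) (m : ℕ) : Prop :=
  runendP τ P m ≤ m ∧ P (runendP τ P m - perP P (3 * τ - 1)) < P (runendP τ P m)

/-- Length of the longest common prefix of patterns `P[1..m₁]` and `Q[1..m₂]`. -/
noncomputable def lcpP (P Q : ℕ → α) (m₁ m₂ : ℕ) : ℕ :=
  sSup {ℓ | ℓ ≤ m₁ ∧ ℓ ≤ m₂ ∧ ∀ t < ℓ, P (1 + t) = Q (1 + t)}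

/-- The pattern `P[1..m]` as a list. -/
def toListP (P : ℕ → α) (m : ℕ) : List α := (List.range m).map fun t => P (1 + t)

/-- The suffix `T[j..]` of the text, viewed as a 1-based pattern. -/
def sufP (T : ℕ → α) (j : ℕ) : ℕ → α := fun k => T (j + k - 1)

/-- `Rset τ n T`: positions `i ∈ [1..n-3τ+2]` with `per(T[i..i+3τ-1)) ≤ τ/3`. -/
noncomputable def Rset (τ n : ℕ) (T : ℕ → α) : Set ℕ :=
  {i | 1 ≤ i ∧ i + 3 * τ ≤ n + 2 ∧ 3 * perP (sufP T i) (3 * τ - 1) ≤ τ}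

/-- The end `e(j)` of the `τ`-run containing position `j ∈ Rset τ n T`:
`e(j) = j + p + lcp(T[j..n], T[j+p..n])`. -/
noncomputable def runEndT (τ n : ℕ) (T : ℕ → α) (j : ℕ) : ℕ :=
  j + runendP τ (sufP T j) (n + 1 - j) - 1

/-- The Lyndon root of the `τ`-run at text position `j`. -/
noncomputable def rootT [LinearOrder α] (τ : ℕ) (T : ℕ → α) (j : ℕ) : List α :=
  rootP τ (sufP T j)

/-- `head` of the `τ`-run at text position `j`. -/
noncomputable def headT [LinearOrder α] (τ : ℕ) (T : ℕ → α) (j : ℕ) : ℕ :=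
  headP τ (sufP T j)

/-- `tail` of the `τ`-run at text position `j`. -/
noncomputable def tailT [LinearOrder α] (τ n : ℕ) (T : ℕ → α) (j : ℕ) : ℕ :=
  tailP τ (sufP T j) (n + 1 - j)

/-- The full run end `efull(j) = e(j) - tail(j)` of the `τ`-run at position `j`. -/
noncomputable def runEndFullT [LinearOrder α] (τ n : ℕ) (T : ℕ → α) (j : ℕ) : ℕ :=
  j + runendfullP τ (sufP T j) (n + 1 - j) - 1

/-- The exponent of the `τ`-run at text position `j`. -/
noncomputable def expT [LinearOrder α] (τ n : ℕ) (T : ℕ → α) (j : ℕ) : ℕ :=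
  expP τ (sufP T j) (n + 1 - j)

/-- The type of text position `j` is `+1`. (Type is `-1` iff this fails.) -/
noncomputable def typePosT [LinearOrder α] (τ n : ℕ) (T : ℕ → α) (j : ℕ) : Prop :=
  typePosP τ (sufP T j) (n + 1 - j)

/-- Starting positions of maximal blocks of `Rset`-positions (starts of maximal `τ`-runs). -/
noncomputable def Rprim (τ n : ℕ) (T : ℕ → α) : Set ℕ :=
  {j | j ∈ Rset τ n T ∧ j - 1 ∉ Rset τ n T}

/-- Positions of `Rset` of type `-1`. -/
noncomputable def RsetMinus [LinearOrder α] (τ n : ℕ) (T : ℕ → α) : Set ℕ :=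
  {j | j ∈ Rset τ n T ∧ ¬ typePosT τ n T j}

/-- `OccSub T n i ℓ`: the set of starting positions of occurrences of the
substring `T[i..i+ℓ)` in the length-`n` text `T`. -/
def OccSub (T : ℕ → α) (n i ℓ : ℕ) : Set ℕ :=
  {q | 1 ≤ q ∧ q + ℓ ≤ n + 1 ∧ SubstrEq T q i ℓ}

/-- `RMinMinus τ n T`: positions `j ∈ R⁻(τ,T)` with
`j = min (Occ(T[j..e(j)), T) ∩ R⁻(τ,T))`. -/
noncomputable def RMinMinus [LinearOrder α] (τ n : ℕ) (T : ℕ → α) : Set ℕ :=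
  {j | j ∈ RsetMinus τ n T ∧
    j = sInf (OccSub T n j (runEndT τ n T j - j) ∩ RsetMinus τ n T)}

/-- `eminT τ n T j = max {j' ∈ [j..n] : [j..j') ⊆ RMinMinus τ n T}`. -/
noncomputable def eminT [LinearOrder α] (τ n : ℕ) (T : ℕ → α) (j : ℕ) : ℕ :=
  sSup {j' | j ≤ j' ∧ j' ≤ n ∧ ∀ t, j ≤ t → t < j' → t ∈ RMinMinus τ n T}

/-- `S` is a `τ`-synchronizing set of the length-`n` text `T`:
`S ⊆ [1..n-2τ+1]`, consistency (equal length-`2τ` contexts give equal membership),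
and density (`[i..i+τ) ∩ S ≠ ∅` iff `i ∉ Rset τ n T`, for `i ∈ [1..n-3τ+2]`). -/
noncomputable def SyncSet (τ n : ℕ) (T : ℕ → α) (S : Set ℕ) : Prop :=
  (∀ s ∈ S, 1 ≤ s ∧ s + 2 * τ ≤ n + 1) ∧
  (∀ i j, 1 ≤ i → i + 2 * τ ≤ n + 1 → 1 ≤ j → j + 2 * τ ≤ n + 1 →
    SubstrEq T i j (2 * τ) → (i ∈ S ↔ j ∈ S)) ∧
  (∀ i, 1 ≤ i → i + 3 * τ ≤ n + 2 →
    ((Set.Ico i (i + τ) ∩ S).Nonempty ↔ i ∉ Rset τ n T))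

/-- `succS S j = min {j' ∈ S : j' ≥ j}`. -/
noncomputable def succS (S : Set ℕ) (j : ℕ) : ℕ := sInf {j' | j' ∈ S ∧ j ≤ j'}

end LZ
section Aux

open LZ

variable {β : Type*}

private lemma foldr_min_mem' [LinearOrder β] (b : β) (l : List β) :
    l.foldr min b = b ∨ l.foldr min b ∈ l := by
  induction l with
  | nil => left; rfl
  | cons a l ih =>
    simp only [List.foldr_cons]
    rcases min_choice a (l.foldr min b) with h | h
    · right; rw [h]; exact List.mem_cons_self
    · rw [h]
      rcases ih with h' | h'
      · left; exact h'
      · right; exact List.mem_cons_of_mem _ h'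

private lemma range_map_eq {n : ℕ} {f g : ℕ → β}
    (h : (List.range n).map f = (List.range n).map g) : ∀ i < n, f i = g i := by
  intro i hi
  have h1 : ((List.range n).map f)[i]? = ((List.range n).map g)[i]? := by rw [h]
  simpa [List.getElem?_map, List.getElem?_range hi] using h1

private lemma perP_spec (P : ℕ → β) {ℓ : ℕ} (hℓ : 0 < ℓ) :
    0 < perP P ℓ ∧ ∀ t, t + perP P ℓ < ℓ → P (1 + t) = P (1 + t + perP P ℓ) := by
  have hmem : ℓ ∈ {p | 0 < p ∧ ∀ t, t + p < ℓ → P (1 + t) = P (1 + t + p)} :=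
    ⟨hℓ, fun t ht => absurd ht (by omega)⟩
  exact Nat.sInf_mem ⟨ℓ, hmem⟩

private lemma perP_le (P : ℕ → β) {ℓ : ℕ} (hℓ : 0 < ℓ) : perP P ℓ ≤ ℓ := by
  have hmem : ℓ ∈ {p | 0 < p ∧ ∀ t, t + p < ℓ → P (1 + t) = P (1 + t + p)} :=
    ⟨hℓ, fun t ht => absurd ht (by omega)⟩
  exact Nat.sInf_le hmem

private lemma agree_perP {τ : ℕ} (P P' : ℕ → β) {N : ℕ} (hN : 3 * τ - 1 ≤ N)
    (hag : ∀ k, 1 ≤ k → k ≤ N → P k = P' k) :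
    perP P' (3 * τ - 1) = perP P (3 * τ - 1) := by
  unfold perP
  congr 1
  ext q
  simp only [Set.mem_setOf_eq]
  constructor <;> rintro ⟨hq, hp⟩ <;> refine ⟨hq, fun t ht => ?_⟩
  · rw [hag (1 + t) (by omega) (by omega), hag (1 + t + q) (by omega) (by omega)]
    exact hp t ht
  · rw [← hag (1 + t) (by omega) (by omega), ← hag (1 + t + q) (by omega) (by omega)]
    exact hp t ht

private lemma agree_rotP (P P' : ℕ → β) {N p δ : ℕ} (hδ : δ + p ≤ N)
    (hag : ∀ k, 1 ≤ k → k ≤ N → P k = P' k) :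
    rotP P p δ = rotP P' p δ := by
  unfold rotP
  refine List.map_congr_left fun t ht => ?_
  rw [List.mem_range] at ht
  exact hag (1 + δ + t) (by omega) (by omega)

section LO
variable [LinearOrder β]

private lemma rootP_exists {τ : ℕ} (P : ℕ → β) (hp0 : 0 < perP P (3 * τ - 1)) :
    ∃ δ < perP P (3 * τ - 1), rotP P (perP P (3 * τ - 1)) δ = rootP τ P := by
  rcases foldr_min_mem' (rotP P (perP P (3 * τ - 1)) 0)
      ((List.range (perP P (3 * τ - 1))).map (rotP P (perP P (3 * τ - 1)))) with h | h
  · exact ⟨0, hp0, h.symm⟩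
  · simp only [List.mem_map, List.mem_range] at h
    obtain ⟨δ, hδ, hh⟩ := h
    exact ⟨δ, hδ, hh⟩

private lemma rootP_length {τ : ℕ} (P : ℕ → β) (hp0 : 0 < perP P (3 * τ - 1)) :
    (rootP τ P).length = perP P (3 * τ - 1) := by
  obtain ⟨δ, _, h⟩ := rootP_exists P hp0
  rw [← h]; simp [rotP]

private lemma headP_lt {τ : ℕ} (P : ℕ → β) (hp0 : 0 < perP P (3 * τ - 1)) :
    headP τ P < perP P (3 * τ - 1) := by
  obtain ⟨δ, hδ, hrot⟩ := rootP_exists P hp0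
  have hmem : δ ∈ {s | rotP P (perP P (3 * τ - 1)) s = rootP τ P} := hrot
  exact lt_of_le_of_lt (Nat.sInf_le hmem) hδ

private lemma headP_spec {τ : ℕ} (P : ℕ → β) (hp0 : 0 < perP P (3 * τ - 1)) :
    rotP P (perP P (3 * τ - 1)) (headP τ P) = rootP τ P := by
  obtain ⟨δ, _, hrot⟩ := rootP_exists P hp0
  have hne : {s | rotP P (perP P (3 * τ - 1)) s = rootP τ P}.Nonempty := ⟨δ, hrot⟩
  exact Nat.sInf_mem hne

private lemma agree_rootP {τ : ℕ} (hτ : 1 ≤ τ) (P P' : ℕ → β) {N : ℕ} (hN : 3 * τ - 1 ≤ N)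
    (hp3 : 3 * perP P (3 * τ - 1) ≤ τ)
    (hag : ∀ k, 1 ≤ k → k ≤ N → P k = P' k) :
    rootP τ P' = rootP τ P := by
  have hpe := agree_perP P P' hN hag
  have hp0 : 0 < perP P (3 * τ - 1) := (perP_spec P (by omega)).1
  unfold rootP
  rw [hpe]
  have hmap : (List.range (perP P (3 * τ - 1))).map (rotP P' (perP P (3 * τ - 1)))
      = (List.range (perP P (3 * τ - 1))).map (rotP P (perP P (3 * τ - 1))) := by
    refine List.map_congr_left fun δ hδ => ?_
    rw [List.mem_range] at hδ
    exact (agree_rotP P P' (by omega) hag).symm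
  rw [hmap, (agree_rotP P P' (show 0 + perP P (3 * τ - 1) ≤ N by omega) hag).symm]

private lemma agree_headP {τ : ℕ} (hτ : 1 ≤ τ) (P P' : ℕ → β) {N : ℕ} (hN : 3 * τ - 1 ≤ N)
    (hp3 : 3 * perP P (3 * τ - 1) ≤ τ)
    (hag : ∀ k, 1 ≤ k → k ≤ N → P k = P' k) :
    headP τ P' = headP τ P := by
  have hpe := agree_perP P P' hN hag
  have hre := agree_rootP hτ P P' hN hp3 hag
  have hp0 : 0 < perP P (3 * τ - 1) := (perP_spec P (by omega)).1
  have hp0' : 0 < perP P' (3 * τ - 1) := by omega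
  have hlt := headP_lt P hp0
  have hlt' := headP_lt P' hp0'
  rw [hpe] at hlt'
  apply le_antisymm
  · apply Nat.sInf_le
    show rotP P' (perP P' (3 * τ - 1)) (headP τ P) = rootP τ P'
    rw [hpe, hre, ← agree_rotP P P' (show headP τ P + perP P (3 * τ - 1) ≤ N by omega) hag]
    exact headP_spec P hp0
  · apply Nat.sInf_le
    show rotP P (perP P (3 * τ - 1)) (headP τ P') = rootP τ P
    rw [← hre, agree_rotP P P'
      (show headP τ P' + perP P (3 * τ - 1) ≤ N by omega) hag, ← hpe]
    exact headP_spec P' hp0'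

private lemma window_agree {τ : ℕ} (hτ : 1 ≤ τ) (P P' : ℕ → β)
    (hp3 : 3 * perP P (3 * τ - 1) ≤ τ)
    (hper' : perP P' (3 * τ - 1) = perP P (3 * τ - 1))
    (hroot : rootP τ P' = rootP τ P)
    (hhead : headP τ P' = headP τ P) :
    ∀ t < 3 * τ - 1, P (1 + t) = P' (1 + t) := by
  have hp0 : 0 < perP P (3 * τ - 1) := (perP_spec P (by omega)).1
  have hp0' : 0 < perP P' (3 * τ - 1) := by omega
  set p := perP P (3 * τ - 1) with hpdef
  set h := headP τ P with hhdef
  have hhlt : h < p := headP_lt P hp0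
  have hper := (perP_spec P (show (0:ℕ) < 3 * τ - 1 by omega)).2
  have hperQ := (perP_spec P' (show (0:ℕ) < 3 * τ - 1 by omega)).2
  rw [hper'] at hperQ
  have hwinrot : rotP P p h = rotP P' p h := by
    have h1 := headP_spec P hp0
    have h2 := headP_spec P' hp0'
    rw [hper', hhead, hroot] at h2
    rw [h1, h2]
  have hwin : ∀ k, h + 1 ≤ k → k ≤ h + p → P k = P' k := by
    intro k hk1 hk2
    unfold rotP at hwinrot
    have := range_map_eq hwinrot (k - 1 - h) (by omega)
    rwa [show 1 + h + (k - 1 - h) = k by omega] at this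
  intro t ht
  induction t using Nat.strong_induction_on with
  | _ t ih =>
    rcases lt_or_ge t h with hth | hth
    · have e1 : P (1 + t) = P (1 + t + p) := hper t (by omega)
      have e2 : P' (1 + t) = P' (1 + t + p) := hperQ t (by omega)
      rw [e1, e2]
      exact hwin (1 + t + p) (by omega) (by omega)
    · rcases lt_or_ge t (h + p) with hth2 | hth2
      · exact hwin (1 + t) (by omega) (by omega)
      · have e1 : P (1 + (t - p)) = P (1 + (t - p) + p) := hper (t - p) (by omega)
        have e2 : P' (1 + (t - p)) = P' (1 + (t - p) + p) := hperQ (t - p) (by omega)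
        rw [show 1 + (t - p) + p = 1 + t by omega] at e1 e2
        rw [← e1, ← e2]
        exact ih (t - p) (by omega) (by omega)

end LO
end Aux

open LZ in
/-- Let `P` be a `τ`-periodic pattern and `P'` any nonempty pattern.
Then `lcp(P,P') ≥ 3τ - 1` iff `P'` is `τ`-periodic with `root(P') = root(P)` and
`head(P') = head(P)`. Moreover, if `runend(P) ≤ |P|` and `lcp(P,P') ≥ runend(P)`,
then `runend(P') = runend(P)`, `tail(P') = tail(P)`, `runendfull(P') = runendfull(P)`,
`exp(P') = exp(P)` and `type(P') = type(P)`. -/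
theorem periodic_pattern_lcp {α : Type*} [LinearOrder α] (τ : ℕ) (hτ : 1 ≤ τ)
    (P P' : ℕ → α) (m m' : ℕ) (hm' : 1 ≤ m')
    (hP : IsPeriodicPat τ P m) :
    (3 * τ - 1 ≤ lcpP P P' m m' ↔
      (IsPeriodicPat τ P' m' ∧ rootP τ P' = rootP τ P ∧ headP τ P' = headP τ P)) ∧
    (runendP τ P m ≤ m → runendP τ P m ≤ lcpP P P' m m' →
      (runendP τ P' m' = runendP τ P m ∧
       tailP τ P' m' = tailP τ P m ∧
       runendfullP τ P' m' = runendfullP τ P m ∧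
       expP τ P' m' = expP τ P m ∧
       (typePosP τ P' m' ↔ typePosP τ P m))) := by
  obtain ⟨hm, hp3⟩ := hP
  have hp0 : 0 < perP P (3 * τ - 1) := (perP_spec P (by omega)).1
  have hperiod := (perP_spec P (show (0:ℕ) < 3 * τ - 1 by omega)).2
  have hple : perP P (3 * τ - 1) ≤ 3 * τ - 1 := perP_le P (by omega)
  have hLbdd : BddAbove {ℓ | ℓ ≤ m ∧ ℓ ≤ m' ∧ ∀ t < ℓ, P (1 + t) = P' (1 + t)} :=
    ⟨m, fun ℓ hℓ => hℓ.1⟩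
  have hLne : Set.Nonempty {ℓ | ℓ ≤ m ∧ ℓ ≤ m' ∧ ∀ t < ℓ, P (1 + t) = P' (1 + t)} :=
    ⟨0, Nat.zero_le _, Nat.zero_le _, fun t ht => absurd ht (by omega)⟩
  have hLmem : lcpP P P' m m' ∈ {ℓ | ℓ ≤ m ∧ ℓ ≤ m' ∧ ∀ t < ℓ, P (1 + t) = P' (1 + t)} :=
    Nat.sSup_mem hLne hLbdd
  obtain ⟨hLm, hLm', hLag⟩ := hLmem
  have hag2 : ∀ k, 1 ≤ k → k ≤ lcpP P P' m m' → P k = P' k := by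
    intro k hk1 hk2
    have := hLag (k - 1) (by omega)
    rwa [show 1 + (k - 1) = k by omega] at this
  constructor
  · constructor
    · intro hL
      have hag : ∀ k, 1 ≤ k → k ≤ 3 * τ - 1 → P k = P' k :=
        fun k hk1 hk2 => hag2 k hk1 (by omega)
      have hpe := agree_perP P P' le_rfl hag
      have hip : IsPeriodicPat τ P' m' := by
        unfold IsPeriodicPat
        exact ⟨by omega, by rw [hpe]; exact hp3⟩
      exact ⟨hip, agree_rootP hτ P P' le_rfl hp3 hag, agree_headP hτ P P' le_rfl hp3 hag⟩
    · rintro ⟨hP', hroot, hhead⟩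
      obtain ⟨hm'3, hp3'⟩ := hP'
      have hp0' : 0 < perP P' (3 * τ - 1) := (perP_spec P' (by omega)).1
      have hpe : perP P' (3 * τ - 1) = perP P (3 * τ - 1) := by
        rw [← rootP_length P' hp0', ← rootP_length P hp0, hroot]
      have hag := window_agree hτ P P' hp3 hpe hroot hhead
      have hmem : (3 * τ - 1) ∈ {ℓ | ℓ ≤ m ∧ ℓ ≤ m' ∧ ∀ t < ℓ, P (1 + t) = P' (1 + t)} :=
        ⟨hm, hm'3, hag⟩
      exact le_csSup hLbdd hmem
  · intro hrun hlcp
    have hrs0 : (3 * τ - 1 - perP P (3 * τ - 1)) ∈ {ℓ | perP P (3 * τ - 1) + ℓ ≤ m ∧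
        ∀ t < ℓ, P (1 + t) = P (1 + perP P (3 * τ - 1) + t)} := by
      refine ⟨by omega, fun t ht => ?_⟩
      rw [show 1 + perP P (3 * τ - 1) + t = 1 + t + perP P (3 * τ - 1) by omega]
      exact hperiod t (by omega)
    have hRSbdd : BddAbove {ℓ | perP P (3 * τ - 1) + ℓ ≤ m ∧
        ∀ t < ℓ, P (1 + t) = P (1 + perP P (3 * τ - 1) + t)} :=
      ⟨m, fun ℓ hℓ => by have := hℓ.1; omega⟩
    obtain ⟨hsm, hsper⟩ := Nat.sSup_mem ⟨_, hrs0⟩ hRSbdd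
    have hsge := le_csSup hRSbdd hrs0
    have hre : runendP τ P m = 1 + perP P (3 * τ - 1) +
        sSup {ℓ | perP P (3 * τ - 1) + ℓ ≤ m ∧
          ∀ t < ℓ, P (1 + t) = P (1 + perP P (3 * τ - 1) + t)} := rfl
    rw [hre] at hrun hlcp
    set s := sSup {ℓ | perP P (3 * τ - 1) + ℓ ≤ m ∧
        ∀ t < ℓ, P (1 + t) = P (1 + perP P (3 * τ - 1) + t)} with hsdef
    have hL3 : 3 * τ - 1 ≤ lcpP P P' m m' := by omega
    have hag : ∀ k, 1 ≤ k → k ≤ 3 * τ - 1 → P k = P' k :=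
      fun k hk1 hk2 => hag2 k hk1 (by omega)
    have hpe := agree_perP P P' (le_refl (3 * τ - 1)) hag
    have hhead := agree_headP hτ P P' (le_refl (3 * τ - 1)) hp3 hag
    have hmax : P (1 + s) ≠ P (1 + perP P (3 * τ - 1) + s) := by
      intro heq
      have hmem : s + 1 ∈ {ℓ | perP P (3 * τ - 1) + ℓ ≤ m ∧
          ∀ t < ℓ, P (1 + t) = P (1 + perP P (3 * τ - 1) + t)} := by
        refine ⟨by omega, fun t ht => ?_⟩
        rcases Nat.lt_succ_iff_lt_or_eq.mp ht with h | h
        · exact hsper t h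
        · subst h; exact heq
      have hss := le_csSup hRSbdd hmem
      rw [← hsdef] at hss
      omega
    have hre' : runendP τ P' m' = 1 + perP P' (3 * τ - 1) +
        sSup {ℓ | perP P' (3 * τ - 1) + ℓ ≤ m' ∧
          ∀ t < ℓ, P' (1 + t) = P' (1 + perP P' (3 * τ - 1) + t)} := rfl
    rw [hpe] at hre'
    have hS'bdd : BddAbove {ℓ | perP P (3 * τ - 1) + ℓ ≤ m' ∧
        ∀ t < ℓ, P' (1 + t) = P' (1 + perP P (3 * τ - 1) + t)} :=
      ⟨m', fun ℓ hℓ => by have := hℓ.1; omega⟩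
    have hsmem' : s ∈ {ℓ | perP P (3 * τ - 1) + ℓ ≤ m' ∧
        ∀ t < ℓ, P' (1 + t) = P' (1 + perP P (3 * τ - 1) + t)} := by
      refine ⟨by omega, fun t ht => ?_⟩
      rw [← hag2 (1 + t) (by omega) (by omega),
        ← hag2 (1 + perP P (3 * τ - 1) + t) (by omega) (by omega)]
      exact hsper t ht
    have hub' : ∀ ℓ ∈ {ℓ | perP P (3 * τ - 1) + ℓ ≤ m' ∧
        ∀ t < ℓ, P' (1 + t) = P' (1 + perP P (3 * τ - 1) + t)}, ℓ ≤ s := by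
      intro ℓ hℓ
      by_contra hgt
      push_neg at hgt
      apply hmax
      rw [hag2 (1 + s) (by omega) (by omega),
        hag2 (1 + perP P (3 * τ - 1) + s) (by omega) (by omega)]
      exact hℓ.2 s (by omega)
    have hseq : sSup {ℓ | perP P (3 * τ - 1) + ℓ ≤ m' ∧
        ∀ t < ℓ, P' (1 + t) = P' (1 + perP P (3 * τ - 1) + t)} = s :=
      le_antisymm (csSup_le ⟨s, hsmem'⟩ hub') (le_csSup hS'bdd hsmem')
    rw [hseq] at hre'
    have hrunfix : runendP τ P' m' = runendP τ P m := by rw [hre', hre]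
    have htail : tailP τ P' m' = tailP τ P m := by
      unfold tailP
      rw [hrunfix, hpe, hhead]
    have hexp : expP τ P' m' = expP τ P m := by
      unfold expP
      rw [hrunfix, hpe, hhead]
    refine ⟨hrunfix, htail, ?_, hexp, ?_⟩
    · unfold runendfullP
      rw [hrunfix, htail]
    · unfold typePosP
      rw [hrunfix, hpe, hre]
      rw [← hag2 (1 + perP P (3 * τ - 1) + s - perP P (3 * τ - 1)) (by omega) (by omega),
        ← hag2 (1 + perP P (3 * τ - 1) + s) (by omega) (by omega)]
      constructor
      · rintro ⟨-, h2⟩; exact ⟨by omega, h2⟩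
      · rintro ⟨-, h2⟩; exact ⟨by omega, h2⟩
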